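/- Let p ∈ (0,1/2) and δ ∈ [0,1/2]. Then lim_{n→∞} (1/n) log P(M_n ≤ n(1−δ) and B > n) = −D(1/2‖p). -/

import Mathlib

open MeasureTheory ProbabilityTheory Filter
open scoped ENNReal

noncomputable section

/-- Kullback–Leibler divergence `D(1/2 ‖ p)` between Bernoulli(1/2) and Bernoulli(p). -/
def Dhalf (p : ℝ) : ℝ := (1/2) * Real.log ((1/2)/p) + (1/2) * Real.log ((1/2)/(1-p))

variable {Ω : Type*} [MeasurableSpace Ω]

/-- The random walk `X_n = Y_1 + ⋯ + Y_n` (here the steps are indexed `Y 0, Y 1, …`). -/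
def walk (Y : ℕ → Ω → ℤ) (n : ℕ) (ω : Ω) : ℤ := ∑ i ∈ Finset.range n, Y i ω

/-- The sign process `X̂_n`: `+1` if `X_n > 0`, `-1` if `X_n < 0`, previous value if `X_n = 0`,
with `X̂_0 = +1`. -/
def sgnProc (Y : ℕ → Ω → ℤ) : ℕ → Ω → ℤ
  | 0 => fun _ => 1
  | n+1 => fun ω =>
      if 0 < walk Y (n+1) ω then 1
      else if walk Y (n+1) ω < 0 then -1
      else sgnProc Y n ω

/-- `M_n = #{1 ≤ i ≤ n : X̂_i = +1}`. -/
def Mcount (Y : ℕ → Ω → ℤ) (n : ℕ) (ω : Ω) : ℕ :=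
  ((Finset.Icc 1 n).filter fun i => sgnProc Y i ω = 1).card

namespace S2

def pwalk (v : ℕ → ℤ) (n : ℕ) : ℤ := ∑ i ∈ Finset.range n, v i

def psgn (v : ℕ → ℤ) : ℕ → ℤ
  | 0 => 1
  | n+1 => if 0 < pwalk v (n+1) then 1 else if pwalk v (n+1) < 0 then -1 else psgn v n

def pM (v : ℕ → ℤ) (n : ℕ) : ℕ := ((Finset.Icc 1 n).filter fun i => psgn v i = 1).card

lemma walk_eq (Y : ℕ → Ω → ℤ) (n : ℕ) (ω : Ω) : walk Y n ω = pwalk (fun j => Y j ω) n := rfl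

lemma sgn_eq (Y : ℕ → Ω → ℤ) (n : ℕ) (ω : Ω) :
    sgnProc Y n ω = psgn (fun j => Y j ω) n := by
  induction n with
  | zero => rfl
  | succ n ih => simp only [sgnProc, psgn, ih, walk_eq]

lemma M_eq (Y : ℕ → Ω → ℤ) (n : ℕ) (ω : Ω) : Mcount Y n ω = pM (fun j => Y j ω) n := by
  unfold Mcount pM
  congr 1
  exact Finset.filter_congr fun i _ => by rw [sgn_eq]

lemma pwalk_congr {v w : ℕ → ℤ} {n : ℕ} (h : ∀ j < n, v j = w j) : pwalk v n = pwalk w n :=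
  Finset.sum_congr rfl fun j hj => h j (Finset.mem_range.1 hj)

lemma psgn_congr {v w : ℕ → ℤ} : ∀ {n : ℕ}, (∀ j < n, v j = w j) → psgn v n = psgn w n
  | 0, _ => rfl
  | n+1, h => by
      have h' : ∀ j < n, v j = w j := fun j hj => h j (Nat.lt_succ_of_lt hj)
      simp only [psgn, pwalk_congr h, psgn_congr h']

lemma pM_congr {v w : ℕ → ℤ} {n : ℕ} (h : ∀ j < n, v j = w j) : pM v n = pM w n := by
  unfold pM
  congr 1
  refine Finset.filter_congr fun i hi => ?_
  have hi' : i ≤ n := (Finset.mem_Icc.1 hi).2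
  rw [psgn_congr (fun j hj => h j (lt_of_lt_of_le hj hi'))]

lemma psgn_mem (v : ℕ → ℤ) : ∀ n, psgn v n = 1 ∨ psgn v n = -1
  | 0 => Or.inl rfl
  | n+1 => by
      simp only [psgn]
      split
      · exact Or.inl rfl
      split
      · exact Or.inr rfl
      · exact psgn_mem v n

lemma pwalk_neg (v : ℕ → ℤ) (n : ℕ) : pwalk (fun j => -v j) n = -pwalk v n := by
  simp [pwalk]

lemma psgn_neg {v : ℕ → ℤ} (hv : v 0 ≠ 0) : ∀ n, 1 ≤ n → psgn (fun j => -v j) n = -psgn v n := by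
  intro n
  induction n with
  | zero => omega
  | succ n ih =>
    intro _
    have h1 : pwalk (fun j => -v j) (n+1) = -pwalk v (n+1) := pwalk_neg v (n+1)
    rcases lt_trichotomy (pwalk v (n+1)) 0 with h | h | h
    · simp only [psgn, h1]
      rw [if_pos (show (0:ℤ) < -pwalk v (n+1) by omega),
        if_neg (show ¬ (0:ℤ) < pwalk v (n+1) by omega), if_pos h]
      norm_num
    · rcases Nat.eq_zero_or_pos n with rfl | hn
      · exfalso; apply hv
        have h2 : pwalk v (0+1) = v 0 := by simp [pwalk]
        omega
      · simp only [psgn, h1, h]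
        norm_num
        exact ih hn
    · simp only [psgn, h1]
      rw [if_neg (show ¬ (0:ℤ) < -pwalk v (n+1) by omega),
        if_pos (show -pwalk v (n+1) < 0 by omega),
        if_pos h]

lemma pM_le (v : ℕ → ℤ) (n : ℕ) : pM v n ≤ n := by
  have := Finset.card_filter_le (Finset.Icc 1 n) (fun i => psgn v i = 1)
  simpa [pM, Nat.card_Icc] using this

lemma pM_neg {v : ℕ → ℤ} (hv : v 0 ≠ 0) (n : ℕ) : pM (fun j => -v j) n = n - pM v n := by
  unfold pM
  have hfil : (Finset.Icc 1 n).filter (fun i => psgn (fun j => -v j) i = 1)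
      = (Finset.Icc 1 n).filter (fun i => ¬ psgn v i = 1) := by
    refine Finset.filter_congr fun i hi => ?_
    have hi1 : 1 ≤ i := (Finset.mem_Icc.1 hi).1
    rw [psgn_neg hv i hi1]
    rcases psgn_mem v i with h | h <;> simp [h]
  rw [hfil, Finset.filter_not, Finset.card_sdiff_of_subset (Finset.filter_subset _ _), Nat.card_Icc]
  omega

def val (b : Bool) : ℤ := if b then 1 else -1

def vext (m : ℕ) (b : Fin m → Bool) : ℕ → ℤ := fun j => if h : j < m then val (b ⟨j, h⟩) else 1

def bvec (Y : ℕ → Ω → ℤ) (m : ℕ) (ω : Ω) : Fin m → Bool := fun i => decide (Y i ω = 1)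

def W (p : ℝ) {m : ℕ} (b : Fin m → Bool) : ℝ≥0∞ :=
  ∏ i, (if b i then ENNReal.ofReal (1-p) else ENNReal.ofReal p)

lemma vext_lt {m : ℕ} (b : Fin m → Bool) {j : ℕ} (h : j < m) : vext m b j = val (b ⟨j, h⟩) :=
  dif_pos h

lemma vext_bvec {Y : ℕ → Ω → ℤ} (hrange : ∀ i ω, Y i ω = 1 ∨ Y i ω = -1)
    (m : ℕ) (ω : Ω) {j : ℕ} (h : j < m) : vext m (bvec Y m ω) j = Y j ω := by
  rw [vext_lt _ h]
  rcases hrange j ω with h1 | h1 <;> simp [bvec, val, h1]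

lemma meas_cyl
    (μ : Measure Ω) [IsProbabilityMeasure μ]
    {p : ℝ} (hp : p ∈ Set.Ioo (0:ℝ) (1/2))
    {Y : ℕ → Ω → ℤ}
    (hmeas : ∀ i, Measurable (Y i))
    (hrange : ∀ i ω, Y i ω = 1 ∨ Y i ω = -1)
    (hdist : ∀ i, μ {ω | Y i ω = 1} = ENNReal.ofReal (1 - p))
    (hindep : iIndepFun Y μ)
    (m : ℕ) (Q : (Fin m → Bool) → Prop) [DecidablePred Q] :
    μ {ω | Q (bvec Y m ω)} = ∑ b ∈ Finset.univ.filter Q, W p b := by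
  have hdist' : ∀ i, μ {ω | Y i ω = -1} = ENNReal.ofReal p := by
    intro i
    have hc : {ω | Y i ω = -1} = {ω | Y i ω = 1}ᶜ := by
      ext ω; rcases hrange i ω with h | h <;> simp [h]
    have hm : MeasurableSet {ω | Y i ω = 1} := hmeas i (measurableSet_singleton 1)
    rw [hc, prob_compl_eq_one_sub hm, hdist i]
    rw [← ENNReal.ofReal_one, ← ENNReal.ofReal_sub _ (by linarith [hp.1, hp.2] : (0:ℝ) ≤ 1 - p)]
    norm_num
  -- measure of a single cylinder
  have hA : ∀ b : Fin m → Bool, μ (⋂ j ∈ Finset.range m, Y j ⁻¹' {vext m b j}) = W p b := by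
    intro b
    rw [hindep.meas_biInter (fun j _ => ⟨{vext m b j}, measurableSet_singleton _, rfl⟩)]
    rw [W, ← Fin.prod_univ_eq_prod_range (fun j => μ (Y j ⁻¹' {vext m b j})) m]
    refine Finset.prod_congr rfl fun i _ => ?_
    have : vext m b i.1 = val (b i) := by rw [vext_lt _ i.2]
    rw [this]
    cases hbi : b i
    · simp only [val, hbi, if_false, Bool.false_eq_true]
      have : Y i.1 ⁻¹' {(-1 : ℤ)} = {ω | Y i.1 ω = -1} := rfl
      rw [this, hdist' i.1]
    · simp only [val, hbi, if_true]
      have : Y i.1 ⁻¹' {(1 : ℤ)} = {ω | Y i.1 ω = 1} := rfl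
      rw [this, hdist i.1]
  -- the event is the disjoint union of cylinders
  have hset : {ω | Q (bvec Y m ω)}
      = ⋃ b ∈ Finset.univ.filter Q, (⋂ j ∈ Finset.range m, Y j ⁻¹' {vext m b j}) := by
    ext ω
    simp only [Set.mem_setOf_eq, Set.mem_iUnion, Finset.mem_filter, Finset.mem_univ, true_and,
      Set.mem_iInter, Set.mem_preimage, Set.mem_singleton_iff, Finset.mem_range]
    constructor
    · intro hQ
      exact ⟨bvec Y m ω, hQ, fun j hj => (vext_bvec hrange m ω hj).symm⟩
    · rintro ⟨b, hQ, hb⟩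
      have : bvec Y m ω = b := by
        funext i
        have := hb i.1 i.2
        rcases hrange i.1 ω with h1 | h1
        · have : val (b i) = 1 := by rw [← vext_lt b i.2, ← this, h1]
          simp only [bvec, h1, decide_eq_true_eq]
          cases hbi : b i
          · rw [hbi] at this; simp [val] at this
          · simp
        · have hv : val (b i) = -1 := by rw [← vext_lt b i.2, ← this, h1]
          simp only [bvec, h1]
          cases hbi : b i
          · simp
          · rw [hbi] at hv; simp [val] at hv
      rwa [this]
  rw [hset]
  rw [measure_biUnion_finset]
  · exact Finset.sum_congr rfl fun b _ => hA b
  · -- pairwise disjoint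
    intro b hb b' hb' hne
    simp only [Finset.coe_filter] at *
    simp only [Function.onFun]
    rw [Set.disjoint_left]
    intro ω hω hω'
    apply hne
    funext i
    simp only [Set.mem_iInter, Set.mem_preimage, Set.mem_singleton_iff, Finset.mem_range] at hω hω'
    have e1 := hω i.1 i.2
    have e2 := hω' i.1 i.2
    rw [vext_lt b i.2] at e1
    rw [vext_lt b' i.2] at e2
    have : val (b i) = val (b' i) := by rw [← e1, ← e2]
    cases hbi : b i <;> cases hbi' : b' i <;> rw [hbi, hbi'] at this <;> simp [val] at this <;> rfl
  · intro b _
    exact Finset.measurableSet_biInter _ fun j _ => hmeas j (measurableSet_singleton _)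

def tb {m : ℕ} (b : Fin m → Bool) : ℕ := (Finset.univ.filter (fun i => b i = true)).card

lemma tb_le {m : ℕ} (b : Fin m → Bool) : tb b ≤ m := by
  have := Finset.card_filter_le (Finset.univ : Finset (Fin m)) (fun i => b i = true)
  simpa [tb] using this

lemma card_filter_not {m : ℕ} (b : Fin m → Bool) :
    (Finset.univ.filter (fun i : Fin m => ¬ b i = true)).card = m - tb b := by
  have := Finset.card_filter_add_card_filter_not
    (s := (Finset.univ : Finset (Fin m))) (p := fun i : Fin m => b i = true)
  simp only [Finset.card_univ, Fintype.card_fin] at this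
  unfold tb; omega

lemma pwalk_vext (m : ℕ) (b : Fin m → Bool) :
    pwalk (vext m b) m = 2 * (tb b : ℤ) - m := by
  unfold pwalk
  rw [← Fin.sum_univ_eq_sum_range (fun j => vext m b j) m]
  have h1 : ∀ i : Fin m, vext m b i.1 = val (b i) := fun i => by
    rw [vext_lt b i.2]
  rw [Finset.sum_congr rfl fun i _ => h1 i]
  rw [← Finset.sum_filter_add_sum_filter_not Finset.univ (fun i => b i = true)]
  have h2 : ∀ i ∈ Finset.univ.filter (fun i : Fin m => b i = true), val (b i) = 1 := by
    intro i hi; simp only [Finset.mem_filter] at hi; simp [val, hi.2]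
  have h3 : ∀ i ∈ Finset.univ.filter (fun i : Fin m => ¬ b i = true), val (b i) = -1 := by
    intro i hi; simp only [Finset.mem_filter, Bool.not_eq_true] at hi
    simp [val, hi.2]
  rw [Finset.sum_congr rfl h2, Finset.sum_congr rfl h3, Finset.sum_const, Finset.sum_const]
  rw [card_filter_not]
  have h6 : (Finset.univ.filter (fun i : Fin m => b i = true)).card = tb b := rfl
  rw [h6]
  simp only [nsmul_eq_mul]
  have h5 := tb_le b
  omega

lemma tb_neg {m : ℕ} (b : Fin m → Bool) : tb (fun i => !b i) = m - tb b := by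
  unfold tb
  have hfil : (Finset.univ.filter (fun i : Fin m => (!b i) = true))
      = (Finset.univ.filter (fun i : Fin m => ¬ b i = true)) := by
    refine Finset.filter_congr fun i _ => by simp
  rw [hfil]
  exact card_filter_not b

lemma W_formula (p : ℝ) {m : ℕ} (b : Fin m → Bool) :
    W p b = (ENNReal.ofReal (1-p)) ^ (tb b) * (ENNReal.ofReal p) ^ (m - tb b) := by
  unfold W
  rw [Finset.prod_ite, Finset.prod_const, Finset.prod_const, card_filter_not]
  rfl

lemma W_of_balanced {p : ℝ} (hp : p ∈ Set.Ioo (0:ℝ) (1/2)) {m : ℕ} {b : Fin m → Bool}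
    (hb : pwalk (vext m b) m = 0) :
    W p b = ENNReal.ofReal ((Real.sqrt (p*(1-p)))^m) := by
  have hp0 : (0:ℝ) < p := hp.1
  have hp1 : (0:ℝ) < 1 - p := by have := hp.2; linarith
  have ht : 2 * tb b = m := by
    have := pwalk_vext m b
    omega
  have hmt : m - tb b = tb b := by omega
  rw [W_formula, hmt, ← mul_pow]
  rw [← ENNReal.ofReal_mul hp1.le, ← ENNReal.ofReal_pow (by positivity)]
  congr 1
  have hq0 : (0:ℝ) ≤ p * (1-p) := by positivity
  conv_rhs => rw [← ht]
  rw [pow_mul, Real.sq_sqrt hq0, mul_comm]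

lemma meas_walk_zero_le
    (μ : Measure Ω) [IsProbabilityMeasure μ]
    {p : ℝ} (hp : p ∈ Set.Ioo (0:ℝ) (1/2))
    {Y : ℕ → Ω → ℤ}
    (hmeas : ∀ i, Measurable (Y i))
    (hrange : ∀ i ω, Y i ω = 1 ∨ Y i ω = -1)
    (hdist : ∀ i, μ {ω | Y i ω = 1} = ENNReal.ofReal (1 - p))
    (hindep : iIndepFun Y μ)
    (m : ℕ) :
    μ {ω | walk Y m ω = 0} ≤ ENNReal.ofReal ((2 * Real.sqrt (p*(1-p)))^m) := by
  have hev : ∀ ω : Ω, walk Y m ω = pwalk (vext m (bvec Y m ω)) m := by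
    intro ω
    rw [walk_eq]
    exact pwalk_congr fun j hj => (vext_bvec hrange m ω hj).symm
  have hset : {ω | walk Y m ω = 0} = {ω | pwalk (vext m (bvec Y m ω)) m = 0} := by
    ext ω; simp only [Set.mem_setOf_eq, hev ω]
  have hc := meas_cyl μ hp hmeas hrange hdist hindep m (fun b => pwalk (vext m b) m = 0)
  rw [hset]
  refine le_trans (le_of_eq hc) ?_
  calc ∑ b ∈ Finset.univ.filter (fun b : Fin m → Bool => pwalk (vext m b) m = 0), W p b
      ≤ (Finset.univ.filter (fun b : Fin m → Bool => pwalk (vext m b) m = 0)).card •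
        ENNReal.ofReal ((Real.sqrt (p*(1-p)))^m) := by
        refine Finset.sum_le_card_nsmul _ _ _ fun b hb => ?_
        rw [W_of_balanced hp (Finset.mem_filter.1 hb).2]
    _ ≤ (2^m : ℕ) • ENNReal.ofReal ((Real.sqrt (p*(1-p)))^m) := by
        rw [nsmul_eq_mul, nsmul_eq_mul]
        have hcard : (Finset.univ.filter
            (fun b : Fin m → Bool => pwalk (vext m b) m = 0)).card ≤ 2^m :=
          le_trans (Finset.card_filter_le _ _) (le_of_eq (by simp [Finset.card_univ]))
        exact mul_le_mul_left (by exact_mod_cast hcard) _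
    _ = ENNReal.ofReal ((2 * Real.sqrt (p*(1-p)))^m) := by
        rw [nsmul_eq_mul, mul_pow]
        rw [ENNReal.ofReal_mul (by positivity), ← ENNReal.ofReal_natCast (2^m)]
        congr 1
        push_cast
        ring

lemma meas_G_ge
    (μ : Measure Ω) [IsProbabilityMeasure μ]
    {p : ℝ} (hp : p ∈ Set.Ioo (0:ℝ) (1/2))
    {Y : ℕ → Ω → ℤ}
    (hmeas : ∀ i, Measurable (Y i))
    (hrange : ∀ i ω, Y i ω = 1 ∨ Y i ω = -1)
    (hdist : ∀ i, μ {ω | Y i ω = 1} = ENNReal.ofReal (1 - p))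
    (hindep : iIndepFun Y μ)
    (n k : ℕ) (hk : n < 2 * k) :
    ENNReal.ofReal ((2 * Real.sqrt (p*(1-p)))^(2*k) / (2*(2*(k:ℝ)+1)))
      ≤ μ {ω | 2 * Mcount Y n ω ≤ n ∧ walk Y (2*k) ω = 0} := by
  set m := 2 * k with hm
  have hev : ∀ ω : Ω, walk Y m ω = pwalk (vext m (bvec Y m ω)) m := by
    intro ω
    rw [walk_eq]
    exact pwalk_congr fun j hj => (vext_bvec hrange m ω hj).symm
  have hevM : ∀ ω : Ω, Mcount Y n ω = pM (vext m (bvec Y m ω)) n := by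
    intro ω
    rw [M_eq]
    exact pM_congr fun j hj => (vext_bvec hrange m ω (lt_of_lt_of_le hj (by omega))).symm
  have hset : {ω | 2 * Mcount Y n ω ≤ n ∧ walk Y m ω = 0}
      = {ω | 2 * pM (vext m (bvec Y m ω)) n ≤ n ∧ pwalk (vext m (bvec Y m ω)) m = 0} := by
    ext ω; simp only [Set.mem_setOf_eq, hev ω, hevM ω]
  have hc := meas_cyl μ hp hmeas hrange hdist hindep m
    (fun b => 2 * pM (vext m b) n ≤ n ∧ pwalk (vext m b) m = 0)
  rw [hset]
  refine le_trans ?_ (le_of_eq hc.symm)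
  set Bal : Finset (Fin m → Bool) :=
    Finset.univ.filter (fun b => pwalk (vext m b) m = 0) with hBal
  set S : Finset (Fin m → Bool) := Finset.univ.filter
    (fun b => 2 * pM (vext m b) n ≤ n ∧ pwalk (vext m b) m = 0) with hS
  have hSB : S ⊆ Bal := by
    intro b hb
    simp only [hS, hBal, Finset.mem_filter, Finset.mem_univ, true_and] at *
    exact hb.2
  have hv0 : ∀ b : Fin m → Bool, vext m b 0 ≠ 0 := by
    intro b
    rw [vext_lt b (by omega : 0 < m)]
    cases h : b ⟨0, by omega⟩ <;> simp [val, h]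
  -- negation preserves weight on Bal and maps Bal \ S into S
  have hnegvext : ∀ (b : Fin m → Bool) (j : ℕ), j < m →
      vext m (fun i => !b i) j = -(vext m b j) := by
    intro b j hj
    rw [vext_lt _ hj, vext_lt b hj]
    cases h : b ⟨j, hj⟩ <;> simp [val, h]
  have hnegwalk : ∀ b : Fin m → Bool,
      pwalk (vext m (fun i => !b i)) m = -(pwalk (vext m b) m) := by
    intro b
    rw [pwalk_congr (w := fun j => -(vext m b j)) (fun j hj => hnegvext b j hj), pwalk_neg]
  have hnegM : ∀ b : Fin m → Bool,
      pM (vext m (fun i => !b i)) n = n - pM (vext m b) n := by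
    intro b
    rw [pM_congr (w := fun j => -(vext m b j))
      (fun j hj => hnegvext b j (lt_of_lt_of_le hj (by omega)))]
    exact pM_neg (hv0 b) n
  have hnegW : ∀ b ∈ Bal, W p (fun i => !b i) = W p b := by
    intro b hb
    simp only [hBal, Finset.mem_filter, Finset.mem_univ, true_and] at hb
    rw [W_of_balanced hp hb, W_of_balanced hp (by rw [hnegwalk b, hb, neg_zero])]
  have hmapS : ∀ b ∈ Bal \ S, (fun i => !b i) ∈ S := by
    intro b hb
    simp only [Finset.mem_sdiff, hBal, hS, Finset.mem_filter, Finset.mem_univ, true_and] at hb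
    obtain ⟨hb1, hb2⟩ := hb
    simp only [hS, Finset.mem_filter, Finset.mem_univ, true_and]
    constructor
    · rw [hnegM b]
      have hMle := pM_le (vext m b) n
      have : ¬ (2 * pM (vext m b) n ≤ n ∧ pwalk (vext m b) m = 0) := hb2
      have h2 : ¬ (2 * pM (vext m b) n ≤ n) := by tauto
      omega
    · rw [hnegwalk b, hb1, neg_zero]
  -- split the bridge sum
  have hsplit : ∑ b ∈ Bal, W p b = ∑ b ∈ Bal \ S, W p b + ∑ b ∈ S, W p b :=
    (Finset.sum_sdiff hSB).symm
  have hneg_inj : ∀ b ∈ Bal \ S, ∀ b' ∈ Bal \ S,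
      (fun i => !b i) = (fun i => !b' i) → b = b' := by
    intro b _ b' _ h
    funext i
    have := congrFun h i
    simpa using this
  have hhalf : ∑ b ∈ Bal \ S, W p b ≤ ∑ b ∈ S, W p b := by
    calc ∑ b ∈ Bal \ S, W p b
        = ∑ b ∈ (Bal \ S).image (fun b i => !b i), W p b := by
          rw [Finset.sum_image hneg_inj]
          exact Finset.sum_congr rfl fun b hb =>
            (hnegW b (Finset.mem_sdiff.1 hb).1).symm
      _ ≤ ∑ b ∈ S, W p b := by
          refine Finset.sum_le_sum_of_subset ?_
          intro b hb
          obtain ⟨b', hb', rfl⟩ := Finset.mem_image.1 hb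
          exact hmapS b' hb'
  have hBal_ge : (Nat.centralBinom k : ℝ≥0∞) * ENNReal.ofReal ((Real.sqrt (p*(1-p)))^m)
      ≤ ∑ b ∈ Bal, W p b := by
    have hcard : Nat.centralBinom k ≤ Bal.card := by
      have hinj : Set.InjOn (fun (s : Finset (Fin m)) => fun i => decide (i ∈ s))
          ((Finset.univ : Finset (Fin m)).powersetCard k) := by
        intro s _ s' _ h
        ext i
        have := congrFun h i
        simpa using this
      have hmaps : ∀ s ∈ (Finset.univ : Finset (Fin m)).powersetCard k,
          (fun i => decide (i ∈ s)) ∈ Bal := by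
        intro s hs
        have hcard' : s.card = k := (Finset.mem_powersetCard.1 hs).2
        simp only [hBal, Finset.mem_filter, Finset.mem_univ, true_and]
        rw [pwalk_vext]
        have htb : tb (fun i => decide (i ∈ s)) = k := by
          unfold tb
          rw [← hcard']
          congr 1
          ext i
          simp
        rw [htb]
        omega
      calc Nat.centralBinom k
          = ((Finset.univ : Finset (Fin m)).powersetCard k).card := by
            rw [Finset.card_powersetCard, Finset.card_univ, Fintype.card_fin, hm,
              Nat.centralBinom]
        _ ≤ Bal.card := Finset.card_le_card_of_injOn _ hmaps hinj
    calc (Nat.centralBinom k : ℝ≥0∞) * ENNReal.ofReal ((Real.sqrt (p*(1-p)))^m)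
        ≤ (Bal.card : ℝ≥0∞) * ENNReal.ofReal ((Real.sqrt (p*(1-p)))^m) :=
          mul_le_mul_left (by exact_mod_cast hcard) _
      _ = ∑ b ∈ Bal, W p b := by
          rw [Finset.sum_congr rfl (fun b hb =>
            W_of_balanced hp (Finset.mem_filter.1 hb).2), Finset.sum_const, nsmul_eq_mul]
  -- put everything together
  have h2S : ∑ b ∈ Bal, W p b ≤ 2 * ∑ b ∈ S, W p b := by
    rw [hsplit, two_mul]
    exact add_le_add_left hhalf _
  have hfinal : ENNReal.ofReal ((2 * Real.sqrt (p*(1-p)))^m / ((2*(k:ℝ)+1)))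
      ≤ 2 * ∑ b ∈ S, W p b := by
    refine le_trans ?_ h2S
    refine le_trans ?_ hBal_ge
    have hq0 : (0:ℝ) ≤ p * (1-p) := by
      have := hp.1; have := hp.2; nlinarith
    have hre : ((2 * Real.sqrt (p*(1-p)))^m / ((2*(k:ℝ)+1)))
        ≤ (Nat.centralBinom k : ℝ) * (Real.sqrt (p*(1-p)))^m := by
      have hcb := Nat.four_pow_le_two_mul_add_one_mul_central_binom k
      have hcbR : (4:ℝ)^k ≤ (2*(k:ℝ)+1) * (Nat.centralBinom k : ℝ) := by
        exact_mod_cast hcb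
      have hsq : (2 * Real.sqrt (p*(1-p)))^m = 4^k * (Real.sqrt (p*(1-p)))^m := by
        rw [mul_pow, hm]
        congr 1
        rw [pow_mul]
        norm_num
      rw [hsq]
      rw [div_le_iff₀ (by positivity)]
      have hs0 : (0:ℝ) ≤ (Real.sqrt (p*(1-p)))^m := by positivity
      nlinarith [hs0, mul_le_mul_of_nonneg_right hcbR hs0]
    calc ENNReal.ofReal ((2 * Real.sqrt (p*(1-p)))^m / ((2*(k:ℝ)+1)))
        ≤ ENNReal.ofReal ((Nat.centralBinom k : ℝ) * (Real.sqrt (p*(1-p)))^m) :=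
          ENNReal.ofReal_le_ofReal hre
      _ = (Nat.centralBinom k : ℝ≥0∞) * ENNReal.ofReal ((Real.sqrt (p*(1-p)))^m) := by
          rw [ENNReal.ofReal_mul (by positivity), ENNReal.ofReal_natCast]
  -- divide by 2
  have : ENNReal.ofReal ((2 * Real.sqrt (p*(1-p)))^m / (2*(2*(k:ℝ)+1)))
      ≤ ∑ b ∈ S, W p b := by
    rw [← ENNReal.mul_le_mul_iff_right (a := 2) (by norm_num) (by norm_num)]
    refine le_trans ?_ hfinal
    rw [show (2 : ℝ≥0∞) = ENNReal.ofReal 2 by norm_num, ← ENNReal.ofReal_mul (by norm_num)]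
    apply ENNReal.ofReal_le_ofReal
    have he : (2:ℝ) * ((2 * Real.sqrt (p*(1-p)))^m / (2*(2*(k:ℝ)+1)))
        = (2 * Real.sqrt (p*(1-p)))^m / ((2*(k:ℝ)+1)) := by
      have hB : (2*(k:ℝ)+1) ≠ 0 := by positivity
      field_simp
    rw [he]
  exact this

lemma tends_aux1 (c : ℝ) : Tendsto (fun n : ℕ => ((n:ℝ)+c)/n) atTop (nhds 1) := by
  have h : Tendsto (fun n : ℕ => 1 + c/(n:ℝ)) atTop (nhds (1+0)) :=
    tendsto_const_nhds.add (tendsto_const_div_atTop_nhds_zero_nat c)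
  rw [add_zero] at h
  refine h.congr' ?_
  filter_upwards [eventually_gt_atTop 0] with n hn
  have hn' : (n:ℝ) ≠ 0 := by positivity
  field_simp

lemma tends_aux2 : Tendsto (fun n : ℕ => Real.log ((n:ℝ)+3) / n) atTop (nhds 0) := by
  have h1 : Tendsto (fun x : ℝ => Real.log x / x) atTop (nhds 0) := by
    have := Real.isLittleO_log_id_atTop.tendsto_div_nhds_zero
    simpa using this
  have h2 : Tendsto (fun n : ℕ => (n:ℝ)+3) atTop atTop :=
    tendsto_atTop_add_const_right _ 3 tendsto_natCast_atTop_atTop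
  have h3 : Tendsto (fun n : ℕ => Real.log ((n:ℝ)+3) / ((n:ℝ)+3)) atTop (nhds 0) := h1.comp h2
  have h4 := h3.mul (S2.tends_aux1 3)
  rw [zero_mul] at h4
  refine h4.congr' ?_
  filter_upwards [eventually_gt_atTop 0] with n hn
  have hn' : (n:ℝ) ≠ 0 := by positivity
  have hn3 : ((n:ℝ)+3) ≠ 0 := by positivity
  field_simp

end S2

/-- For `p ∈ (0,1/2)` and `δ ∈ [0,1/2]`,
`lim_{n→∞} (1/n) log P(M_n ≤ n(1−δ), B > n) = −D(1/2‖p)`, where `B` is the time of the last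
visit of the walk to `0` (so `B > n` iff `∃ m > n, X_m = 0`). -/
theorem stmt2
    (μ : Measure Ω) [IsProbabilityMeasure μ]
    (p : ℝ) (hp : p ∈ Set.Ioo (0:ℝ) (1/2))
    (Y : ℕ → Ω → ℤ)
    (hmeas : ∀ i, Measurable (Y i))
    (hrange : ∀ i ω, Y i ω = 1 ∨ Y i ω = -1)
    (hdist : ∀ i, μ {ω | Y i ω = 1} = ENNReal.ofReal (1 - p))
    (hindep : iIndepFun Y μ)
    (δ : ℝ) (hδ : δ ∈ Set.Icc (0:ℝ) (1/2)) :
    Tendsto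
      (fun n : ℕ =>
        Real.log ((μ {ω | (Mcount Y n ω : ℝ) ≤ (n : ℝ) * (1 - δ) ∧
            ∃ m, n < m ∧ walk Y m ω = 0}).toReal) / (n : ℝ))
      atTop (nhds (-(Dhalf p))) := by
  classical
  have hp0 : (0:ℝ) < p := hp.1
  have hp2 : p < 1/2 := hp.2
  have hq0 : (0:ℝ) < p * (1-p) := by nlinarith
  have hs0 : (0:ℝ) < Real.sqrt (p*(1-p)) := Real.sqrt_pos.2 hq0
  obtain ⟨θ, hθdef⟩ : ∃ θ : ℝ, θ = 2 * Real.sqrt (p*(1-p)) := ⟨_, rfl⟩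
  have hθ0 : (0:ℝ) < θ := by rw [hθdef]; positivity
  have hθ1 : θ < 1 := by
    have hq4 : p * (1-p) < 1/4 := by nlinarith
    have h1 : Real.sqrt (p*(1-p)) < Real.sqrt (1/4) := Real.sqrt_lt_sqrt hq0.le hq4
    have h2 : Real.sqrt (1/4) = 1/2 := by
      rw [show (1/4:ℝ) = (1/2)^2 by norm_num, Real.sqrt_sq (by norm_num : (0:ℝ) ≤ 1/2)]
    rw [h2] at h1
    rw [hθdef]; linarith
  have hlogθ : Real.log θ = -(Dhalf p) := by
    have hp1 : (1:ℝ) - p > 0 := by linarith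
    rw [hθdef, Real.log_mul (by norm_num) (ne_of_gt hs0), Real.log_sqrt hq0.le,
      Real.log_mul (ne_of_gt hp0) (ne_of_gt hp1)]
    unfold Dhalf
    rw [Real.log_div (by norm_num) (ne_of_gt hp0), Real.log_div (by norm_num) (ne_of_gt hp1),
      one_div, Real.log_inv]
    ring
  set E : ℕ → Set Ω := fun n => {ω | (Mcount Y n ω : ℝ) ≤ (n : ℝ) * (1 - δ) ∧
      ∃ m, n < m ∧ walk Y m ω = 0} with hE
  -- upper bound
  have hub : ∀ n : ℕ, μ (E n) ≤ ENNReal.ofReal (θ^(n+1) * (1-θ)⁻¹) := by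
    intro n
    have hsub : E n ⊆ ⋃ j : ℕ, {ω | walk Y (n+1+j) ω = 0} := by
      rintro ω ⟨-, m, hm, hw⟩
      refine Set.mem_iUnion.2 ⟨m - (n+1), ?_⟩
      have hmm : n+1+(m-(n+1)) = m := by omega
      simp only [Set.mem_setOf_eq, hmm]
      exact hw
    have hr1 : ENNReal.ofReal θ < 1 := ENNReal.ofReal_lt_one.2 hθ1
    calc μ (E n) ≤ μ (⋃ j : ℕ, {ω | walk Y (n+1+j) ω = 0}) := measure_mono hsub
      _ ≤ ∑' j : ℕ, μ {ω | walk Y (n+1+j) ω = 0} := measure_iUnion_le _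
      _ ≤ ∑' j : ℕ, (ENNReal.ofReal θ)^(n+1+j) := by
          refine ENNReal.tsum_le_tsum fun j => ?_
          refine le_trans (S2.meas_walk_zero_le μ hp hmeas hrange hdist hindep (n+1+j)) ?_
          rw [hθdef, ← ENNReal.ofReal_pow (by rw [hθdef] at hθ0; exact hθ0.le)]
      _ = (ENNReal.ofReal θ)^(n+1) * (1 - ENNReal.ofReal θ)⁻¹ := by
          have hpa : ∀ j : ℕ, (ENNReal.ofReal θ)^(n+1+j)
              = (ENNReal.ofReal θ)^(n+1) * (ENNReal.ofReal θ)^j := fun j => pow_add _ _ _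
          rw [tsum_congr hpa, ENNReal.tsum_mul_left, ENNReal.tsum_geometric]
      _ = ENNReal.ofReal (θ^(n+1) * (1-θ)⁻¹) := by
          have e1 : (1 : ℝ≥0∞) - ENNReal.ofReal θ = ENNReal.ofReal (1-θ) := by
            rw [ENNReal.ofReal_sub _ hθ0.le, ENNReal.ofReal_one]
          rw [e1, ← ENNReal.ofReal_inv_of_pos (by linarith), ← ENNReal.ofReal_pow hθ0.le,
            ← ENNReal.ofReal_mul (by positivity)]
  -- lower bound
  have hlb : ∀ n : ℕ, ENNReal.ofReal (θ^(n+2) / (2*((n:ℝ)+3))) ≤ μ (E n) := by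
    intro n
    have hk1 : n < 2*(n/2+1) := by omega
    have hk2 : 2*(n/2+1) ≤ n+2 := by omega
    have hG := S2.meas_G_ge μ hp hmeas hrange hdist hindep n (n/2+1) hk1
    refine le_trans ?_ (le_trans hG (measure_mono ?_))
    · apply ENNReal.ofReal_le_ofReal
      have hθ1' : 2 * Real.sqrt (p*(1-p)) ≤ 1 := by rw [← hθdef]; exact hθ1.le
      have h2' : ((2*(n/2+1) : ℕ) : ℝ) ≤ (n:ℝ)+2 := by exact_mod_cast hk2
      push_cast at h2'
      rw [hθdef]
      refine div_le_div₀ (by positivity)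
        (pow_le_pow_of_le_one (by positivity) hθ1' hk2) (by positivity) ?_
      push_cast
      linarith
    · rintro ω ⟨hM, hw⟩
      refine ⟨?_, 2*(n/2+1), hk1, hw⟩
      have hMr : 2*(Mcount Y n ω : ℝ) ≤ (n:ℝ) := by exact_mod_cast hM
      have hn0 : (0:ℝ) ≤ (n:ℝ) := Nat.cast_nonneg n
      have hδ2 : δ ≤ 1/2 := hδ.2
      nlinarith
  -- real-valued bounds
  have hxa : ∀ n : ℕ, θ^(n+2) / (2*((n:ℝ)+3)) ≤ (μ (E n)).toReal := fun n =>
    (ENNReal.ofReal_le_iff_le_toReal (measure_ne_top μ _)).1 (hlb n)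
  have hxb : ∀ n : ℕ, (μ (E n)).toReal ≤ θ^(n+1) * (1-θ)⁻¹ := fun n =>
    ENNReal.toReal_le_of_le_ofReal
      (by have h1θ : (0:ℝ) < 1 - θ := by linarith
          positivity) (hub n)
  have ha0 : ∀ n : ℕ, (0:ℝ) < θ^(n+2) / (2*((n:ℝ)+3)) := by intro n; positivity
  -- limits of the bounding sequences
  have hLa : Tendsto (fun n : ℕ => Real.log (θ^(n+2) / (2*((n:ℝ)+3))) / n)
      atTop (nhds (Real.log θ)) := by
    have hid : ∀ n : ℕ, Real.log (θ^(n+2) / (2*((n:ℝ)+3))) / n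
        = Real.log θ * (((n:ℝ)+2)/n) - (Real.log 2)/n - Real.log ((n:ℝ)+3)/n := by
      intro n
      rw [Real.log_div (by positivity) (by positivity), Real.log_pow,
        Real.log_mul (by norm_num) (by positivity)]
      push_cast
      ring
    simp only [hid]
    have := ((tendsto_const_nhds (x := Real.log θ)).mul (S2.tends_aux1 2)).sub
      ((tendsto_const_div_atTop_nhds_zero_nat (Real.log 2)))
    have h2 := this.sub S2.tends_aux2
    simpa using h2
  have hLb : Tendsto (fun n : ℕ => Real.log (θ^(n+1) * (1-θ)⁻¹) / n)
      atTop (nhds (Real.log θ)) := by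
    have hid : ∀ n : ℕ, Real.log (θ^(n+1) * (1-θ)⁻¹) / n
        = Real.log θ * (((n:ℝ)+1)/n) + (Real.log (1-θ)⁻¹)/n := by
      intro n
      rw [Real.log_mul (by positivity)
        (by have h1θ : (0:ℝ) < 1 - θ := by linarith
            positivity), Real.log_pow]
      push_cast
      ring
    simp only [hid]
    have := ((tendsto_const_nhds (x := Real.log θ)).mul (S2.tends_aux1 1)).add
      ((tendsto_const_div_atTop_nhds_zero_nat (Real.log (1-θ)⁻¹)))
    simpa using this
  -- squeeze
  have hsq : Tendsto (fun n : ℕ => Real.log ((μ (E n)).toReal) / n)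
      atTop (nhds (Real.log θ)) := by
    refine tendsto_of_tendsto_of_tendsto_of_le_of_le' hLa hLb ?_ ?_
    · filter_upwards [eventually_gt_atTop 0] with n hn
      have hc : (0:ℝ) ≤ n := Nat.cast_nonneg n
      gcongr
      exact hxa n
    · filter_upwards [eventually_gt_atTop 0] with n hn
      have hc : (0:ℝ) ≤ n := Nat.cast_nonneg n
      gcongr
      · exact lt_of_lt_of_le (ha0 n) (hxa n)
      · exact hxb n
  rw [← hlogθ]
  exact hsq
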